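/- Under the hypotheses that the Hermitian part of Z_SS is positive semidefinite and Re(z_s) = R_0 > 0 for all s, the coupling coefficient φ_TR := z_TR - z_TS Z_SE^{-1} z_SR satisfies |φ_TR| ≤ |z_TR| + (1/R_0)‖z_TS‖‖z_SR‖. -/

import Mathlib

open Matrix
open scoped ComplexOrder

private lemma herm_pair_conj {N : ℕ} (A : Matrix (Fin N) (Fin N) ℂ) (x : Fin N → ℂ) :
    star x ⬝ᵥ (Aᴴ *ᵥ x) = star (star x ⬝ᵥ (A *ᵥ x)) := by
  rw [dotProduct_mulVec, ← star_mulVec, star_dotProduct]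

private lemma key_coercive {N : ℕ} (ZSS : Matrix (Fin N) (Fin N) ℂ)
    (hZSS : (((1 : ℂ) / 2) • (ZSS + ZSSᴴ)).PosSemidef)
    (zRIS : Fin N → ℂ) (R₀ : ℝ) (hz : ∀ s, (zRIS s).re = R₀) (x : Fin N → ℂ) :
    R₀ * (∑ i, Complex.normSq (x i)) ≤
      (star x ⬝ᵥ ((ZSS + Matrix.diagonal zRIS) *ᵥ x)).re := by
  have hpos := hZSS.dotProduct_mulVec_nonneg x
  set a : ℂ := star x ⬝ᵥ (ZSS *ᵥ x) with ha
  have h1 : star x ⬝ᵥ ((((1 : ℂ) / 2) • (ZSS + ZSSᴴ)) *ᵥ x) = ((1 : ℂ)/2) * (a + star a) := by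
    rw [smul_mulVec, dotProduct_smul, add_mulVec, dotProduct_add, herm_pair_conj]
    simp [smul_eq_mul, ← ha]
  have hre : 0 ≤ a.re := by
    rw [Complex.le_def] at hpos
    have := hpos.1
    rw [h1] at this
    simpa [Complex.add_re, Complex.mul_re, Complex.add_im] using this
  have hdiag : (star x ⬝ᵥ (Matrix.diagonal zRIS *ᵥ x)).re = R₀ * ∑ i, Complex.normSq (x i) := by
    simp only [dotProduct, Matrix.mulVec_diagonal, Pi.star_apply]
    rw [Complex.re_sum, Finset.mul_sum]
    congr 1; funext i
    have : star (x i) * (zRIS i * x i) = zRIS i * (Complex.normSq (x i) : ℂ) := by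
      rw [Complex.normSq_eq_conj_mul_self]
      simp only [starRingEnd_apply]
      ring
    rw [this]
    simp [Complex.mul_re, hz i]
  rw [add_mulVec, dotProduct_add, Complex.add_re, hdiag, ← ha]
  linarith

set_option maxHeartbeats 1000000 in
/-- Under passivity of `Z_SS` and loads with real part `R₀ > 0`, the coupling coefficient
`φ_TR = z_TR - z_TS Z_SE⁻¹ z_SR` satisfies `|φ_TR| ≤ |z_TR| + (1/R₀)‖z_TS‖‖z_SR‖`. -/
theorem phiTR_bound (N : ℕ) (ZSS : Matrix (Fin N) (Fin N) ℂ)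
    (hZSS : (((1 : ℂ) / 2) • (ZSS + ZSSᴴ)).PosSemidef)
    (zRIS : Fin N → ℂ) (R₀ : ℝ) (hR₀ : 0 < R₀) (hz : ∀ s, (zRIS s).re = R₀)
    (zTR : ℂ) (zTS zSR : Fin N → ℂ) :
    ‖zTR - zTS ⬝ᵥ ((ZSS + Matrix.diagonal zRIS)⁻¹ *ᵥ zSR)‖ ≤
      ‖zTR‖ + (1 / R₀) *
        (‖(EuclideanSpace.equiv (Fin N) ℂ).symm zTS‖ *
          ‖(EuclideanSpace.equiv (Fin N) ℂ).symm zSR‖) := by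
  set Z : Matrix (Fin N) (Fin N) ℂ := ZSS + Matrix.diagonal zRIS with hZdef
  have key := key_coercive ZSS hZSS zRIS R₀ hz
  -- kernel is trivial
  have hker : ∀ v : Fin N → ℂ, Z *ᵥ v = 0 → v = 0 := by
    intro v hv
    have h1 := key v
    rw [hv, dotProduct_zero, Complex.zero_re] at h1
    have h2 : ∑ i, Complex.normSq (v i) ≤ 0 := by
      nlinarith [Finset.sum_nonneg (fun i (_ : i ∈ Finset.univ) => Complex.normSq_nonneg (v i))]
    have h3 : ∀ i ∈ Finset.univ, Complex.normSq (v i) = 0 := by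
      intro i _
      have := Finset.sum_nonneg (fun i (_ : i ∈ Finset.univ) => Complex.normSq_nonneg (v i))
      have hsum : ∑ i, Complex.normSq (v i) = 0 := le_antisymm h2 this
      exact (Finset.sum_eq_zero_iff_of_nonneg
        (fun i _ => Complex.normSq_nonneg (v i))).mp hsum i (Finset.mem_univ i)
    funext i
    exact Complex.normSq_eq_zero.mp (h3 i (Finset.mem_univ i))
  have hinj : Function.Injective Z.mulVec := by
    intro u v huv
    have : Z *ᵥ (u - v) = 0 := by rw [mulVec_sub, huv, sub_self]
    have := hker _ this
    exact sub_eq_zero.mp this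
  have hU : IsUnit Z := mulVec_injective_iff_isUnit.mp hinj
  have hdet : IsUnit Z.det := (isUnit_iff_isUnit_det Z).mp hU
  set y : Fin N → ℂ := Z⁻¹ *ᵥ zSR with hy
  have hZy : Z *ᵥ y = zSR := by
    rw [hy, mulVec_mulVec, mul_nonsing_inv Z hdet, one_mulVec]
  clear_value y
  -- Euclidean space elements
  set Ey : EuclideanSpace ℂ (Fin N) := (WithLp.equiv 2 _).symm y with hEy
  set ES : EuclideanSpace ℂ (Fin N) := (WithLp.equiv 2 _).symm zSR with hES
  set ET : EuclideanSpace ℂ (Fin N) := (WithLp.equiv 2 _).symm zTS with hET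
  have hnormy2 : R₀ * ‖Ey‖ ^ 2 ≤ ‖Ey‖ * ‖ES‖ := by
    have h1 := key y
    rw [hZy] at h1
    have hsum : ∑ i, Complex.normSq (y i) = ‖Ey‖ ^ 2 := by
      have hn : ‖Ey‖ = Real.sqrt (∑ i, ‖y i‖ ^ 2) := by
        rw [hEy, EuclideanSpace.norm_eq]
        simp
      rw [hn, Real.sq_sqrt (by positivity)]
      congr 1; funext i
      simp [Complex.normSq_eq_norm_sq]
    have h2 : (star y ⬝ᵥ zSR).re ≤ ‖Ey‖ * ‖ES‖ := by
      have hcs : ‖(inner ℂ Ey ES : ℂ)‖ ≤ ‖Ey‖ * ‖ES‖ := norm_inner_le_norm Ey ES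
      have hinner : (inner ℂ Ey ES : ℂ) = star y ⬝ᵥ zSR := by
          show zSR ⬝ᵥ star y = _
          rw [dotProduct_comm]
      calc (star y ⬝ᵥ zSR).re ≤ ‖star y ⬝ᵥ zSR‖ := Complex.re_le_norm _
        _ = ‖(inner ℂ Ey ES : ℂ)‖ := by rw [hinner]
        _ ≤ ‖Ey‖ * ‖ES‖ := hcs
    rw [hsum] at h1
    linarith
  have hylen : ‖Ey‖ ≤ (1 / R₀) * ‖ES‖ := by
    rcases eq_or_lt_of_le (norm_nonneg Ey) with h0 | h0
    · rw [← h0]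
      positivity
    · have h2 : R₀ * ‖Ey‖ ≤ ‖ES‖ := by nlinarith
      rw [div_mul_eq_mul_div, one_mul, le_div_iff₀ hR₀]
      linarith
  have hTS : ‖zTS ⬝ᵥ y‖ ≤ ‖ET‖ * ‖Ey‖ := by
    have hinner : (inner ℂ ((WithLp.equiv 2 (Fin N → ℂ)).symm (star zTS)) Ey : ℂ) = zTS ⬝ᵥ y := by
      show y ⬝ᵥ star (star zTS) = _
      rw [star_star, dotProduct_comm]
    have hns : ‖(WithLp.equiv 2 (Fin N → ℂ)).symm (star zTS)‖ = ‖ET‖ := by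
      rw [hET]
      simp [EuclideanSpace.norm_eq]
    calc ‖zTS ⬝ᵥ y‖ = ‖(inner ℂ ((WithLp.equiv 2 (Fin N → ℂ)).symm (star zTS)) Ey : ℂ)‖ := by
          rw [hinner]
      _ ≤ ‖(WithLp.equiv 2 (Fin N → ℂ)).symm (star zTS)‖ * ‖Ey‖ := norm_inner_le_norm _ _
      _ = ‖ET‖ * ‖Ey‖ := by rw [hns]
  have hfinal : ‖zTS ⬝ᵥ y‖ ≤ (1 / R₀) * (‖ET‖ * ‖ES‖) := by
    calc ‖zTS ⬝ᵥ y‖ ≤ ‖ET‖ * ‖Ey‖ := hTS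
      _ ≤ ‖ET‖ * ((1 / R₀) * ‖ES‖) := by
          exact mul_le_mul_of_nonneg_left hylen (norm_nonneg ET)
      _ = (1 / R₀) * (‖ET‖ * ‖ES‖) := by ring
  have hgoalTS : ‖(EuclideanSpace.equiv (Fin N) ℂ).symm zTS‖ = ‖ET‖ := rfl
  have hgoalSR : ‖(EuclideanSpace.equiv (Fin N) ℂ).symm zSR‖ = ‖ES‖ := rfl
  rw [hgoalTS, hgoalSR]
  calc ‖zTR - zTS ⬝ᵥ y‖
      ≤ ‖zTR‖ + ‖zTS ⬝ᵥ y‖ := by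
        simpa using norm_sub_le zTR (zTS ⬝ᵥ y)
    _ ≤ ‖zTR‖ + (1 / R₀) * (‖ET‖ * ‖ES‖) := by
        exact add_le_add_right hfinal _
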